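/- arXiv:2504.00209 — 8 statements merged into one kernel-verified Lean document; each statement's English description precedes it below -/
import Mathlib

section
/- Fix μ₁ > 0 and l ∈ ℕ. There exists a constant c > 0 (depending only on l and μ₁) such that for all α with 0 < α ≤ μ₁² and all μ with 0 < μ ≤ μ₁, q_l(α,μ)/μ ≤ c·α^{−1/2}. -/
open Real

/-- For μ₁ > 0 and l ∈ ℕ there is a constant c > 0 such that for all
0 < α ≤ μ₁² and 0 < μ ≤ μ₁, `q_l(α,μ)/μ ≤ c α^{-1/2}`. -/
theorem stmt_1 (μ₁ : ℝ) (hμ₁ : 0 < μ₁) (l : ℕ) :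
    ∃ c : ℝ, 0 < c ∧ ∀ α : ℝ, 0 < α → α ≤ μ₁ ^ 2 → ∀ μ : ℝ, 0 < μ → μ ≤ μ₁ →
      (μ ^ 2 / (μ ^ 2 + α * (1 - (μ / μ₁) ^ 2) ^ l)) / μ ≤ c * α ^ (-(1 / 2 : ℝ)) := by
  refine ⟨2 ^ l + 2, by positivity, ?_⟩
  intro α hα hαμ μ hμ hμμ
  set c : ℝ := 2 ^ l + 2 with hcdef
  set s := Real.sqrt α with hsdef
  have hs0 : 0 < s := Real.sqrt_pos.mpr hα
  have hs2 : s ^ 2 = α := Real.sq_sqrt hα.le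
  have hsμ₁ : s ≤ μ₁ := by
    calc s ≤ Real.sqrt (μ₁ ^ 2) := Real.sqrt_le_sqrt hαμ
    _ = μ₁ := Real.sqrt_sq hμ₁.le
  have hrpow : α ^ (-(1 / 2 : ℝ)) = s⁻¹ := by
    rw [Real.rpow_neg hα.le, hsdef, Real.sqrt_eq_rpow]
  set w : ℝ := 1 - (μ / μ₁) ^ 2 with hwdef
  have hw0 : 0 ≤ w := by
    have h1 : (μ / μ₁) ^ 2 ≤ 1 := by
      have : μ / μ₁ ≤ 1 := (div_le_one hμ₁).mpr hμμ
      have h0 : 0 ≤ μ / μ₁ := by positivity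
      nlinarith
    rw [hwdef]; linarith
  have hwl0 : 0 ≤ α * w ^ l := by positivity
  have hD : 0 < μ ^ 2 + α * w ^ l := by positivity
  have hq : μ ^ 2 / (μ ^ 2 + α * w ^ l) / μ = μ / (μ ^ 2 + α * w ^ l) := by
    field_simp
  rw [hq, hrpow]
  rw [show c * s⁻¹ = c / s by rw [div_eq_mul_inv]]
  rw [div_le_div_iff₀ hD hs0]
  -- goal : μ * s ≤ c * (μ ^ 2 + α * w ^ l)
  by_cases hcase : μ ^ 2 * 2 ≤ μ₁ ^ 2
  · -- small μ: w ≥ 1/2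
    have hw : (1 / 2 : ℝ) ≤ w := by
      have h1 : (μ / μ₁) ^ 2 ≤ 1 / 2 := by
        rw [div_pow, div_le_div_iff₀ (by positivity) (by norm_num : (0:ℝ) < 2)]
        linarith
      simp only [hwdef]; linarith
    set t : ℝ := (1 / 2 : ℝ) ^ l with htdef
    have ht : 0 < t := by positivity
    have ht1 : t ≤ 1 := pow_le_one₀ (by norm_num) (by norm_num)
    have htinv : t * 2 ^ l = 1 := by
      rw [htdef, ← mul_pow]; norm_num
    have hwt : t ≤ w ^ l := pow_le_pow_left₀ (by norm_num) hw l
    have hD2 : s ^ 2 * t ≤ α * w ^ l := by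
      rw [hs2]
      exact mul_le_mul_of_nonneg_left hwt hα.le
    have key : 2 * t * (μ * s) ≤ μ ^ 2 + s ^ 2 * t := by
      nlinarith [sq_nonneg (μ - s * t),
        mul_nonneg (sq_nonneg s) (mul_nonneg ht.le (sub_nonneg.mpr ht1))]
    have h1 : (1 : ℝ) ≤ 2 * t * c := by
      rw [hcdef]; nlinarith [htinv, ht.le]
    have h3 : 2 * t * (μ * s) ≤ 2 * t * (c * (μ ^ 2 + α * w ^ l)) := by
      calc 2 * t * (μ * s) ≤ μ ^ 2 + s ^ 2 * t := key
        _ ≤ μ ^ 2 + α * w ^ l := by linarith [hD2]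
        _ = 1 * (μ ^ 2 + α * w ^ l) := (one_mul _).symm
        _ ≤ (2 * t * c) * (μ ^ 2 + α * w ^ l) := mul_le_mul_of_nonneg_right h1 hD.le
        _ = 2 * t * (c * (μ ^ 2 + α * w ^ l)) := by ring
    exact le_of_mul_le_mul_left h3 (by positivity)
  · -- large μ: μ₁ ≤ 2 μ
    have h2μ : μ₁ ≤ 2 * μ := by nlinarith
    have hc2 : (2 : ℝ) ≤ c := by
      rw [hcdef]; nlinarith [pow_pos (by norm_num : (0:ℝ) < 2) l]
    nlinarith [mul_le_mul_of_nonneg_left hsμ₁ hμ.le, hwl0,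
      mul_nonneg (sub_nonneg.mpr hc2) hwl0, sq_nonneg μ,
      mul_nonneg (sub_nonneg.mpr hc2) (sq_nonneg μ)]
end

section
/- Fix μ₁ > 0, l ∈ ℕ, and r ≥ 1/2. There exists a constant c > 0 (depending only on l and μ₁) such that for all α with 0 < α ≤ μ₁² and all μ with 0 < μ ≤ μ₁, q_l^r(α,μ)/μ ≤ c·α^{−1/2}. (This is condition (B1) with γ = 1/2 for the fractional weighted Tikhonov filter.) -/
open Real

/-- For μ₁ > 0, l ∈ ℕ and r ≥ 1/2 there is a constant c > 0 such that for
all 0 < α ≤ μ₁² and 0 < μ ≤ μ₁, `q_l^r(α,μ)/μ ≤ c α^{-1/2}` (condition (B1), γ = 1/2). -/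
theorem stmt_2 (μ₁ : ℝ) (hμ₁ : 0 < μ₁) (l : ℕ) (r : ℝ) (hr : 1 / 2 ≤ r) :
    ∃ c : ℝ, 0 < c ∧ ∀ α : ℝ, 0 < α → α ≤ μ₁ ^ 2 → ∀ μ : ℝ, 0 < μ → μ ≤ μ₁ →
      (μ ^ (2 * r) / (μ ^ 2 + α * (1 - (μ / μ₁) ^ 2) ^ l) ^ r) / μ
        ≤ c * α ^ (-(1 / 2 : ℝ)) := by
  refine ⟨2 ^ (l + 1), by positivity, ?_⟩
  intro α hα hα1 μ hμ hμ1
  set c : ℝ := 2 ^ (l + 1) with hc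
  have hcpos : (0:ℝ) < c := by positivity
  set w : ℝ := 1 - (μ / μ₁) ^ 2 with hwdef
  have hw : 0 ≤ w := by
    have h1 : μ / μ₁ ≤ 1 := (div_le_one hμ₁).mpr hμ1
    have h0 : 0 ≤ μ / μ₁ := by positivity
    rw [hwdef]; nlinarith
  set D : ℝ := μ ^ 2 + α * w ^ l with hDdef
  have hD : 0 < D := by positivity
  -- key inequality : α ≤ c^2 * D
  have hkey : α ≤ c ^ 2 * D := by
    have hc2 : (2:ℝ) ^ l ≤ c ^ 2 := by
      rw [hc, ← pow_mul]
      exact pow_le_pow_right₀ (by norm_num) (by omega)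
    have hc2' : (2:ℝ) ≤ c ^ 2 := by
      calc (2:ℝ) ≤ 2 ^ (l+1) := by
            exact_mod_cast le_self_pow (by norm_num) (by omega)
        _ ≤ c ^ 2 := by
            rw [hc, ← pow_mul]
            exact pow_le_pow_right₀ (by norm_num) (by omega)
    by_cases hcase : μ₁ ^ 2 ≤ 2 * μ ^ 2
    · have : α ≤ 2 * μ ^ 2 := le_trans hα1 hcase
      nlinarith [pow_nonneg hw l, mul_nonneg hα.le (pow_nonneg hw l)]
    · push_neg at hcase
      have hw2 : (1/2 : ℝ) ≤ w := by
        have : μ ^ 2 / μ₁ ^ 2 < 1 / 2 := by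
          rw [div_lt_div_iff₀ (by positivity) (by norm_num)]
          nlinarith
        have hq : (μ / μ₁) ^ 2 = μ ^ 2 / μ₁ ^ 2 := by ring
        rw [hwdef, hq]; linarith
      have hwl : (1/2 : ℝ) ^ l ≤ w ^ l := pow_le_pow_left₀ (by norm_num) hw2 l
      have h2l : α ≤ 2 ^ l * (α * w ^ l) := by
        have h1 : α * (1/2:ℝ) ^ l ≤ α * w ^ l := by
          exact mul_le_mul_of_nonneg_left hwl hα.le
        have h2 : (2:ℝ) ^ l * ((1/2:ℝ) ^ l) = 1 := by
          rw [← mul_pow]; norm_num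
        nlinarith [pow_pos (show (0:ℝ) < 2 by norm_num) l]
      calc α ≤ 2 ^ l * (α * w ^ l) := h2l
        _ ≤ c ^ 2 * (α * w ^ l) := by
            exact mul_le_mul_of_nonneg_right hc2 (by positivity)
        _ ≤ c ^ 2 * D := by
            have : α * w ^ l ≤ D := by nlinarith
            exact mul_le_mul_of_nonneg_left this (by positivity)
  -- rewrite LHS
  have hq1 : μ ^ 2 / D ≤ 1 := by
    rw [div_le_one hD]
    nlinarith [mul_nonneg hα.le (pow_nonneg hw l)]
  have hlhs : (μ ^ (2 * r) / D ^ r) / μ = ((μ ^ 2 / D) ^ r) / μ := by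
    rw [Real.div_rpow (by positivity) hD.le, ← Real.rpow_natCast μ 2,
      ← Real.rpow_mul hμ.le]
    norm_num
  rw [hlhs]
  have step1 : ((μ ^ 2 / D) ^ r) / μ ≤ ((μ ^ 2 / D) ^ ((1:ℝ)/2)) / μ := by
    have h := Real.rpow_le_rpow_of_exponent_ge (x := μ ^ 2 / D) (by positivity) hq1 hr
    exact div_le_div_of_nonneg_right h hμ.le
  have step2 : ((μ ^ 2 / D) ^ ((1:ℝ)/2)) / μ = 1 / Real.sqrt D := by
    rw [← Real.sqrt_eq_rpow, Real.sqrt_div' , Real.sqrt_sq hμ.le]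
    · field_simp
    all_goals positivity
  refine (step1.trans_eq step2).trans ?_
  rw [Real.rpow_neg hα.le, ← Real.sqrt_eq_rpow]
  have hsa : Real.sqrt α ≤ c * Real.sqrt D := by
    calc Real.sqrt α ≤ Real.sqrt (c ^ 2 * D) := Real.sqrt_le_sqrt hkey
      _ = c * Real.sqrt D := by
          rw [Real.sqrt_mul (by positivity), Real.sqrt_sq hcpos.le]
  have h1 : (1:ℝ) / Real.sqrt D ≤ c / Real.sqrt α := by
    rw [div_le_div_iff₀ (Real.sqrt_pos.mpr hD) (Real.sqrt_pos.mpr hα)]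
    linarith
  calc (1:ℝ) / Real.sqrt D ≤ c / Real.sqrt α := h1
    _ = c * (Real.sqrt α)⁻¹ := by ring
end

section
/- Fix μ₁ > 0, l ∈ ℕ, and r ≥ 1/2. For every α > 0 and every μ with 0 < μ ≤ μ₁, q_l^r(α,μ)/μ ≤ 1/√(μ² + α·(1 − (μ/μ₁)²)^l); in particular, for each fixed α > 0 the function μ ↦ q_l^r(α,μ)/μ is bounded on (0, μ₁] (condition (A1)). -/
open Real

lemma stmt3_main (μ₁ : ℝ) (hμ₁ : 0 < μ₁) (l : ℕ) (r : ℝ) (hr : 1 / 2 ≤ r)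
    (α : ℝ) (hα : 0 < α) (μ : ℝ) (hμ : 0 < μ) (hle : μ ≤ μ₁) :
    (μ ^ (2 * r) / (μ ^ 2 + α * (1 - (μ / μ₁) ^ 2) ^ l) ^ r) / μ
      ≤ 1 / Real.sqrt (μ ^ 2 + α * (1 - (μ / μ₁) ^ 2) ^ l) := by
  set D : ℝ := μ ^ 2 + α * (1 - (μ / μ₁) ^ 2) ^ l with hD
  have hratio : (μ / μ₁) ^ 2 ≤ 1 := by
    have : μ / μ₁ ≤ 1 := (div_le_one hμ₁).2 hle
    have h0 : 0 ≤ μ / μ₁ := div_nonneg hμ.le hμ₁.le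
    nlinarith
  have hterm : 0 ≤ α * (1 - (μ / μ₁) ^ 2) ^ l :=
    mul_nonneg hα.le (pow_nonneg (by linarith) l)
  have hD0 : 0 < D := by positivity
  have hμ2D : μ ^ 2 ≤ D := by simp [hD]; linarith
  have hx0 : 0 < μ ^ 2 / D := div_pos (by positivity) hD0
  have hx1 : μ ^ 2 / D ≤ 1 := (div_le_one hD0).2 hμ2D
  have key : (μ ^ 2 / D) ^ r ≤ (μ ^ 2 / D) ^ (1/2 : ℝ) :=
    Real.rpow_le_rpow_of_exponent_ge hx0 hx1 hr
  have hrw : μ ^ (2 * r) / D ^ r = (μ ^ 2 / D) ^ r := by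
    rw [Real.div_rpow (by positivity) hD0.le]
    congr 1
    rw [← Real.rpow_natCast μ 2, ← Real.rpow_mul hμ.le]
    norm_num
  have hhalf : (μ ^ 2 / D) ^ (1/2 : ℝ) = μ / Real.sqrt D := by
    rw [← Real.sqrt_eq_rpow, Real.sqrt_div (by positivity) D, Real.sqrt_sq hμ.le]
  rw [hrw]
  calc (μ ^ 2 / D) ^ r / μ ≤ (μ / Real.sqrt D) / μ := by
        rw [← hhalf]; gcongr
    _ = 1 / Real.sqrt D := by
        field_simp

/-- For μ₁ > 0, l ∈ ℕ, r ≥ 1/2, α > 0 and 0 < μ ≤ μ₁,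
`q_l^r(α,μ)/μ ≤ 1/√(μ² + α (1-(μ/μ₁)²)^l)`; in particular for each fixed α > 0 the map
μ ↦ q_l^r(α,μ)/μ is bounded on (0, μ₁] (condition (A1)). -/
theorem stmt_3 (μ₁ : ℝ) (hμ₁ : 0 < μ₁) (l : ℕ) (r : ℝ) (hr : 1 / 2 ≤ r)
    (α : ℝ) (hα : 0 < α) :
    (∀ μ : ℝ, 0 < μ → μ ≤ μ₁ →
      (μ ^ (2 * r) / (μ ^ 2 + α * (1 - (μ / μ₁) ^ 2) ^ l) ^ r) / μ
        ≤ 1 / Real.sqrt (μ ^ 2 + α * (1 - (μ / μ₁) ^ 2) ^ l)) ∧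
    ∃ C : ℝ, ∀ μ : ℝ, 0 < μ → μ ≤ μ₁ →
      (μ ^ (2 * r) / (μ ^ 2 + α * (1 - (μ / μ₁) ^ 2) ^ l) ^ r) / μ ≤ C := by
  refine ⟨fun μ hμ hle => stmt3_main μ₁ hμ₁ l r hr α hα μ hμ hle, ?_⟩
  set m : ℝ := min (μ₁ ^ 2 / 2) (α / 2 ^ l) with hm
  have hm0 : 0 < m := lt_min (by positivity) (by positivity)
  refine ⟨1 / Real.sqrt m, fun μ hμ hle => ?_⟩
  refine (stmt3_main μ₁ hμ₁ l r hr α hα μ hμ hle).trans ?_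
  have hDm : m ≤ μ ^ 2 + α * (1 - (μ / μ₁) ^ 2) ^ l := by
    have hratio : (μ / μ₁) ^ 2 ≤ 1 := by
      have : μ / μ₁ ≤ 1 := (div_le_one hμ₁).2 hle
      have h0 : 0 ≤ μ / μ₁ := div_nonneg hμ.le hμ₁.le
      nlinarith
    have hterm : 0 ≤ α * (1 - (μ / μ₁) ^ 2) ^ l :=
      mul_nonneg hα.le (pow_nonneg (by linarith) l)
    by_cases hcase : μ₁ ^ 2 / 2 ≤ μ ^ 2
    · have := min_le_left (μ₁ ^ 2 / 2) (α / 2 ^ l)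
      linarith
    · push_neg at hcase
      have hhalf : (1/2 : ℝ) ≤ 1 - (μ / μ₁) ^ 2 := by
        have h2 : μ ^ 2 / μ₁ ^ 2 ≤ 1/2 := by
          rw [div_le_div_iff₀ (by positivity) (by norm_num)]; linarith
        have h3 : (μ / μ₁) ^ 2 = μ ^ 2 / μ₁ ^ 2 := by ring
        linarith [h3 ▸ h2]
      have hpow : (1/2 : ℝ) ^ l ≤ (1 - (μ / μ₁) ^ 2) ^ l :=
        pow_le_pow_left₀ (by norm_num) hhalf l
      have h1 : α / 2 ^ l ≤ α * (1 - (μ / μ₁) ^ 2) ^ l := by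
        have := mul_le_mul_of_nonneg_left hpow hα.le
        rw [one_div, inv_pow, ← div_eq_mul_inv] at this
        simpa using this
      have h2 := min_le_right (μ₁ ^ 2 / 2) (α / 2 ^ l)
      nlinarith [sq_nonneg μ]
  have hs : Real.sqrt m ≤ Real.sqrt (μ ^ 2 + α * (1 - (μ / μ₁) ^ 2) ^ l) :=
    Real.sqrt_le_sqrt hDm
  exact one_div_le_one_div_of_le (Real.sqrt_pos.2 hm0) hs
end

section
/- Fix μ₁ > 0 and l ∈ ℕ. For every σ with 0 < σ ≤ 2, every α > 0, and every μ with 0 < μ ≤ μ₁, one has (1 − q_l(α,μ))·μ^σ ≤ α^{σ/2}. (This is condition (B2) with γ = 1/2 and constant c_σ = 1 for the weighted-II Tikhonov filter.) -/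
open Real

/-- For μ₁ > 0, l ∈ ℕ, 0 < σ ≤ 2, α > 0 and 0 < μ ≤ μ₁,
`(1 - q_l(α,μ)) μ^σ ≤ α^{σ/2}` (condition (B2) with γ = 1/2 and c_σ = 1). -/
theorem stmt_5 (μ₁ : ℝ) (hμ₁ : 0 < μ₁) (l : ℕ) (σ : ℝ) (hσ : 0 < σ) (hσ2 : σ ≤ 2)
    (α : ℝ) (hα : 0 < α) (μ : ℝ) (hμ : 0 < μ) (hμμ₁ : μ ≤ μ₁) :
    (1 - μ ^ 2 / (μ ^ 2 + α * (1 - (μ / μ₁) ^ 2) ^ l)) * μ ^ σ ≤ α ^ (σ / 2) := by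
  set w : ℝ := (1 - (μ / μ₁) ^ 2) ^ l with hw
  have hr0 : (0:ℝ) ≤ 1 - (μ / μ₁) ^ 2 := by
    have h1 : μ / μ₁ ≤ 1 := (div_le_one hμ₁).mpr hμμ₁
    have h0 : 0 ≤ μ / μ₁ := by positivity
    nlinarith
  have hr1 : 1 - (μ / μ₁) ^ 2 ≤ 1 := by
    have : 0 ≤ (μ / μ₁) ^ 2 := by positivity
    linarith
  have hw0 : 0 ≤ w := by positivity
  have hw1 : w ≤ 1 := pow_le_one₀ hr0 hr1
  have hD : 0 < μ ^ 2 + α * w := by positivity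
  have hq : 1 - μ ^ 2 / (μ ^ 2 + α * w) = α * w / (μ ^ 2 + α * w) := by
    field_simp
    ring
  rw [hq, div_mul_eq_mul_div, div_le_iff₀ hD]
  set t : ℝ := σ / 2 with ht
  have ht0 : 0 < t := by positivity
  have ht1 : t ≤ 1 := by simp only [ht]; linarith
  rcases eq_or_lt_of_le hw0 with hwz | hwp
  · rw [← hwz]
    have : (0:ℝ) ≤ α ^ t * (μ ^ 2 + α * 0) := by positivity
    simpa using this
  · -- μ^σ = (μ^2)^t
    have hmusig : μ ^ σ = (μ ^ 2) ^ t := by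
      rw [← Real.rpow_natCast μ 2, ← Real.rpow_mul hμ.le]
      norm_num [ht]
      ring_nf
    have hgm : (μ ^ 2) ^ t * (α * w) ^ (1 - t) ≤ t * (μ ^ 2) + (1 - t) * (α * w) :=
      Real.geom_mean_le_arith_mean2_weighted ht0.le (by linarith) (by positivity)
        (by positivity) (by ring)
    have hsum : t * (μ ^ 2) + (1 - t) * (α * w) ≤ μ ^ 2 + α * w := by
      have h1 : 0 ≤ μ ^ 2 := by positivity
      have h2 : 0 ≤ α * w := by positivity
      nlinarith
    have hpow : (α * w) ^ t ≤ α ^ t := by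
      apply Real.rpow_le_rpow (by positivity) _ ht0.le
      nlinarith
    have hsplit : α * w = (α * w) ^ t * (α * w) ^ (1 - t) := by
      rw [← Real.rpow_add (by positivity)]; norm_num
    calc α * w * μ ^ σ = (α * w) ^ t * ((μ ^ 2) ^ t * (α * w) ^ (1 - t)) := by
          rw [hmusig]; nth_rewrite 1 [hsplit]; ring
      _ ≤ α ^ t * (μ ^ 2 + α * w) := by
          apply mul_le_mul hpow (le_trans hgm hsum) (by positivity) (by positivity)
end

section
/- Fix r ≥ 1/2 and let f(x) = ((x+1)^r − x^r)/(x+1)^{r−1} for x ≥ 0. Then f is monotone on [0,∞) (monotone nondecreasing if r ≥ 1 and monotone nonincreasing if 1/2 ≤ r ≤ 1), and consequently min{1, r} ≤ f(x) ≤ max{1, r} for all x ≥ 0. -/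
open Real

/-- The explicit form of `f` as a difference. -/
private lemma stmt8_eq (r x : ℝ) (hx : 0 ≤ x) :
    ((x + 1) ^ r - x ^ r) / (x + 1) ^ (r - 1)
      = (x + 1) - x ^ r * (x + 1) ^ (1 - r) := by
  have h1 : (0:ℝ) < x + 1 := by linarith
  rw [sub_div]
  congr 1
  · rw [← Real.rpow_sub h1, show r - (r - 1) = 1 by ring, Real.rpow_one]
  · rw [div_eq_mul_inv, ← Real.rpow_neg h1.le, show -(r - 1) = 1 - r by ring]

private lemma stmt8_hasDerivAt (r : ℝ) {x : ℝ} (hx : 0 < x) :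
    HasDerivAt (fun y : ℝ => (y + 1) - y ^ r * (y + 1) ^ (1 - r))
      (1 - (r * x ^ (r - 1) * (x + 1) ^ (1 - r) + x ^ r * ((1 - r) * (x + 1) ^ (-r)))) x := by
  have h1 : (0:ℝ) < x + 1 := by linarith
  have hA : HasDerivAt (fun y : ℝ => y ^ r) (r * x ^ (r - 1)) x :=
    Real.hasDerivAt_rpow_const (Or.inl hx.ne')
  have hB : HasDerivAt (fun y : ℝ => (y + 1) ^ (1 - r)) ((1 - r) * (x + 1) ^ (-r)) x := by
    have := (Real.hasDerivAt_rpow_const (p := 1 - r) (Or.inl h1.ne')).comp x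
      ((hasDerivAt_id x).add_const 1)
    simpa [Function.comp_def, show 1 - r - 1 = -r by ring] using this
  exact ((hasDerivAt_id x).add_const 1).sub (hA.mul hB)

/-- key pointwise facts about `t = x/(x+1)` -/
private lemma stmt8_t_facts (r x : ℝ) (hx : 0 < x) :
    x ^ (r - 1) * (x + 1) ^ (1 - r) = (x / (x + 1)) ^ (r - 1) ∧
    x ^ r * (x + 1) ^ (-r) = (x / (x + 1)) ^ r := by
  have h1 : (0:ℝ) < x + 1 := by linarith
  constructor
  · rw [Real.div_rpow hx.le h1.le, div_eq_mul_inv, ← Real.rpow_neg h1.le,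
      show -(r - 1) = 1 - r by ring]
  · rw [Real.div_rpow hx.le h1.le, div_eq_mul_inv, ← Real.rpow_neg h1.le]

/-- derivative nonneg when r ≥ 1 -/
private lemma stmt8_dge (r : ℝ) (hr : 1 ≤ r) {x : ℝ} (hx : 0 < x) :
    r * x ^ (r - 1) * (x + 1) ^ (1 - r) + x ^ r * ((1 - r) * (x + 1) ^ (-r)) ≤ 1 := by
  obtain ⟨e1, e2⟩ := stmt8_t_facts r x hx
  set t : ℝ := x / (x + 1) with ht
  have h1 : (0:ℝ) < x + 1 := by linarith
  have ht0 : 0 < t := div_pos hx h1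
  have hr0 : (0:ℝ) < r := by linarith
  -- AM-GM : 1^(1/r) * (t^r)^((r-1)/r) ≤ 1/r + (r-1)/r * t^r
  have amgm := Real.geom_mean_le_arith_mean2_weighted
    (by positivity : (0:ℝ) ≤ 1 / r) (show (0:ℝ) ≤ (r - 1) / r from div_nonneg (by linarith) hr0.le)
    (by norm_num : (0:ℝ) ≤ 1) (Real.rpow_nonneg ht0.le r)
    (by field_simp; ring)
  rw [Real.one_rpow, one_mul, ← Real.rpow_mul ht0.le,
    show r * ((r - 1) / r) = r - 1 by field_simp,
    show (1:ℝ) / r * 1 + (r - 1) / r * t ^ r = (1 + (r - 1) * t ^ r) / r by field_simp,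
    le_div_iff₀ hr0] at amgm
  rw [mul_assoc, e1, mul_left_comm (x ^ r), e2]
  nlinarith [amgm]

/-- derivative nonpos when r ≤ 1 -/
private lemma stmt8_dle (r : ℝ) (hr : 1 / 2 ≤ r) (hr1 : r ≤ 1) {x : ℝ} (hx : 0 < x) :
    1 ≤ r * x ^ (r - 1) * (x + 1) ^ (1 - r) + x ^ r * ((1 - r) * (x + 1) ^ (-r)) := by
  obtain ⟨e1, e2⟩ := stmt8_t_facts r x hx
  set t : ℝ := x / (x + 1) with ht
  have h1 : (0:ℝ) < x + 1 := by linarith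
  have ht0 : 0 < t := div_pos hx h1
  have amgm := Real.geom_mean_le_arith_mean2_weighted
    (show (0:ℝ) ≤ r by linarith) (show (0:ℝ) ≤ 1 - r by linarith)
    (by norm_num : (0:ℝ) ≤ 1) ht0.le (by ring)
  rw [Real.one_rpow, one_mul, mul_one] at amgm
  -- amgm : t ^ (1 - r) ≤ r + (1 - r) * t
  have hpos : (0:ℝ) < t ^ (r - 1) := Real.rpow_pos_of_pos ht0 _
  have key := mul_le_mul_of_nonneg_right amgm hpos.le
  rw [← Real.rpow_add ht0, show 1 - r + (r - 1) = 0 by ring, Real.rpow_zero] at key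
  have e3 : t ^ r = t * t ^ (r - 1) := by
    have h := Real.rpow_add ht0 1 (r - 1)
    rw [show (1:ℝ) + (r - 1) = r by ring, Real.rpow_one] at h
    exact h
  have key2 : 1 ≤ r * t ^ (r - 1) + (1 - r) * t ^ r := by
    calc 1 ≤ (r + (1 - r) * t) * t ^ (r - 1) := key
    _ = r * t ^ (r - 1) + (1 - r) * (t * t ^ (r - 1)) := by ring
    _ = r * t ^ (r - 1) + (1 - r) * t ^ r := by rw [← e3]
  rw [mul_assoc, e1, mul_left_comm (x ^ r), e2]
  linarith

/-- product form of f -/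
private lemma stmt8_eq2 (r x : ℝ) (hx : 0 < x) :
    ((x + 1) ^ r - x ^ r) / (x + 1) ^ (r - 1)
      = (x + 1) * (1 - (x / (x + 1)) ^ r) := by
  have h1 : (0:ℝ) < x + 1 := by linarith
  rw [stmt8_eq r x hx.le]
  have e2 := (stmt8_t_facts r x hx).2
  have e : x ^ r * (x + 1) ^ (1 - r) = (x + 1) * (x / (x + 1)) ^ r := by
    rw [show (1 - r) = 1 + (-r) by ring, Real.rpow_add h1, Real.rpow_one, ← e2]; ring
  rw [e]; ring

private lemma stmt8_one_sub (x : ℝ) (hx : 0 < x) :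
    (x + 1) * (1 - x / (x + 1)) = 1 := by
  have h1 : (0:ℝ) < x + 1 := by linarith
  field_simp; ring

/-- upper bound r for r ≥ 1 -/
private lemma stmt8_ub (r : ℝ) (hr1 : 1 ≤ r) {x : ℝ} (hx : 0 < x) :
    ((x + 1) ^ r - x ^ r) / (x + 1) ^ (r - 1) ≤ r := by
  have h1 : (0:ℝ) < x + 1 := by linarith
  rw [stmt8_eq2 r x hx]
  set t : ℝ := x / (x + 1) with ht
  have ht0 : 0 < t := div_pos hx h1
  have hr0 : (0:ℝ) < r := by linarith
  have amgm := Real.geom_mean_le_arith_mean2_weighted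
    (show (0:ℝ) ≤ 1 / r from by positivity)
    (show (0:ℝ) ≤ (r - 1) / r from div_nonneg (by linarith) hr0.le)
    (Real.rpow_nonneg ht0.le r) (by norm_num : (0:ℝ) ≤ 1)
    (by field_simp; ring)
  rw [Real.one_rpow, mul_one, ← Real.rpow_mul ht0.le,
    show r * (1 / r) = 1 by field_simp, Real.rpow_one,
    show (1:ℝ) / r * t ^ r + (r - 1) / r * 1 = (t ^ r + (r - 1)) / r by ring,
    le_div_iff₀ hr0] at amgm
  -- amgm : t * r ≤ t ^ r + (r - 1)
  calc (x + 1) * (1 - t ^ r) ≤ (x + 1) * (r * (1 - t)) :=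
        mul_le_mul_of_nonneg_left (by linarith) h1.le
  _ = r * ((x + 1) * (1 - t)) := by ring
  _ = r := by rw [stmt8_one_sub x hx, mul_one]

/-- lower bound r for r ≤ 1 -/
private lemma stmt8_lb (r : ℝ) (hr : 1 / 2 ≤ r) (hr1 : r ≤ 1) {x : ℝ} (hx : 0 < x) :
    r ≤ ((x + 1) ^ r - x ^ r) / (x + 1) ^ (r - 1) := by
  have h1 : (0:ℝ) < x + 1 := by linarith
  rw [stmt8_eq2 r x hx]
  set t : ℝ := x / (x + 1) with ht
  have ht0 : 0 < t := div_pos hx h1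
  have amgm := Real.geom_mean_le_arith_mean2_weighted
    (show (0:ℝ) ≤ 1 - r by linarith) (show (0:ℝ) ≤ r by linarith)
    (by norm_num : (0:ℝ) ≤ 1) ht0.le (by ring)
  rw [Real.one_rpow, one_mul] at amgm
  -- amgm : t ^ r ≤ (1 - r) * 1 + r * t
  calc r = r * ((x + 1) * (1 - t)) := by rw [stmt8_one_sub x hx, mul_one]
  _ = (x + 1) * (r * (1 - t)) := by ring
  _ ≤ (x + 1) * (1 - t ^ r) := mul_le_mul_of_nonneg_left (by linarith) h1.le

private lemma stmt8_mono (r : ℝ) (hr1 : 1 ≤ r) :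
    MonotoneOn (fun y : ℝ => (y + 1) - y ^ r * (y + 1) ^ (1 - r)) (Set.Ici 0) := by
  apply monotoneOn_of_deriv_nonneg (convex_Ici 0)
  · intro y hy
    have hy0 : (0:ℝ) ≤ y := hy
    have c1 : ContinuousAt (fun y : ℝ => y ^ r) y :=
      Real.continuousAt_rpow_const y r (Or.inr (by linarith))
    have c2 : ContinuousAt (fun y : ℝ => (y + 1) ^ (1 - r)) y :=
      ContinuousAt.rpow_const (continuousAt_id.add continuousAt_const)
        (Or.inl (by simp; linarith))
    exact ((continuousAt_id.add continuousAt_const).sub (c1.mul c2)).continuousWithinAt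
  · rw [interior_Ici]
    intro y hy
    exact (stmt8_hasDerivAt r hy).differentiableAt.differentiableWithinAt
  · rw [interior_Ici]
    intro y hy
    rw [(stmt8_hasDerivAt r hy).deriv]
    have := stmt8_dge r hr1 hy
    linarith

private lemma stmt8_anti (r : ℝ) (hr : 1 / 2 ≤ r) (hr1 : r ≤ 1) :
    AntitoneOn (fun y : ℝ => (y + 1) - y ^ r * (y + 1) ^ (1 - r)) (Set.Ici 0) := by
  apply antitoneOn_of_deriv_nonpos (convex_Ici 0)
  · intro y hy
    have hy0 : (0:ℝ) ≤ y := hy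
    have c1 : ContinuousAt (fun y : ℝ => y ^ r) y :=
      Real.continuousAt_rpow_const y r (Or.inr (by linarith))
    have c2 : ContinuousAt (fun y : ℝ => (y + 1) ^ (1 - r)) y :=
      ContinuousAt.rpow_const (continuousAt_id.add continuousAt_const)
        (Or.inl (by simp; linarith))
    exact ((continuousAt_id.add continuousAt_const).sub (c1.mul c2)).continuousWithinAt
  · rw [interior_Ici]
    intro y hy
    exact (stmt8_hasDerivAt r hy).differentiableAt.differentiableWithinAt
  · rw [interior_Ici]
    intro y hy
    rw [(stmt8_hasDerivAt r hy).deriv]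
    have := stmt8_dle r hr hr1 hy
    linarith

/-- For r ≥ 1/2 and `f(x) = ((x+1)^r - x^r)/(x+1)^{r-1}` on `[0,∞)`,
`f` is monotone nondecreasing on `[0,∞)` if `r ≥ 1` and nonincreasing if `1/2 ≤ r ≤ 1`;
consequently `min{1,r} ≤ f(x) ≤ max{1,r}` for all `x ≥ 0`. -/
theorem stmt_8 (r : ℝ) (hr : 1 / 2 ≤ r)
    (f : ℝ → ℝ) (hf : ∀ x : ℝ, 0 ≤ x → f x = ((x + 1) ^ r - x ^ r) / (x + 1) ^ (r - 1)) :
    (1 ≤ r → MonotoneOn f (Set.Ici 0)) ∧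
    (r ≤ 1 → AntitoneOn f (Set.Ici 0)) ∧
    (∀ x : ℝ, 0 ≤ x → min 1 r ≤ f x ∧ f x ≤ max 1 r) := by
  have hr0 : (0:ℝ) < r := by linarith
  have hmono : 1 ≤ r → MonotoneOn f (Set.Ici 0) := by
    intro hr1 a ha b hb hab
    rw [hf a ha, hf b hb, stmt8_eq r a ha, stmt8_eq r b hb]
    exact stmt8_mono r hr1 ha hb hab
  have hanti : r ≤ 1 → AntitoneOn f (Set.Ici 0) := by
    intro hr1 a ha b hb hab
    rw [hf a ha, hf b hb, stmt8_eq r a ha, stmt8_eq r b hb]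
    exact stmt8_anti r hr hr1 ha hb hab
  have hf0 : f 0 = 1 := by
    rw [hf 0 le_rfl, show (0:ℝ) + 1 = 1 by norm_num, Real.one_rpow,
      Real.zero_rpow hr0.ne', Real.one_rpow]
    norm_num
  refine ⟨hmono, hanti, fun x hx => ?_⟩
  rcases le_total r 1 with h1 | h1
  · rw [min_eq_right h1, max_eq_left h1]
    constructor
    · rcases eq_or_lt_of_le hx with h | h
      · rw [← h, hf0]; linarith
      · rw [hf x hx]; exact stmt8_lb r hr h1 h
    · have := hanti h1 (Set.self_mem_Ici) hx hx
      rw [hf0] at this; exact this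
  · rw [min_eq_left h1, max_eq_right h1]
    constructor
    · have := hmono h1 (Set.self_mem_Ici) hx hx
      rw [hf0] at this; exact this
    · rcases eq_or_lt_of_le hx with h | h
      · rw [← h, hf0]; linarith
      · rw [hf x hx]; exact stmt8_ub r h1 h
end

section
/- Fix μ₁ > 0, l ∈ ℕ, r ≥ 1/2, and a natural number m ≥ 1. For every σ with 0 ≤ σ ≤ 2m, every α > 0, and every μ with 0 < μ ≤ μ₁, one has (1 − Q_l^{m,r}(α,μ))·μ^σ = (1 − q_l^r(α,μ))^m · μ^σ ≤ max{1, r}^m · μ₁^{max(σ−2m, 0)} · α^{σ/2}; in particular for 0 ≤ σ ≤ 2m the bound (1 − Q_l^{m,r}(α,μ))·μ^σ ≤ max{1, r}^m · α^{σ/2} holds. (This is condition (B2) with γ = 1/2 for the iterated filter, giving qualification 2m.) -/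
open Real

private lemma stmt_12_aux (r : ℝ) (hr : 1 / 2 ≤ r) (m : ℕ) (σ : ℝ) (hσ0 : 0 ≤ σ)
    (hσ2m : σ ≤ 2 * m) (α : ℝ) (hα : 0 < α) (μ : ℝ) (hμ : 0 < μ)
    (D : ℝ) (hD1 : μ ^ 2 ≤ D) (hD2 : D ≤ μ ^ 2 + α) :
    (1 - μ ^ (2 * r) / D ^ r) ^ m * μ ^ σ ≤ max 1 r ^ m * α ^ (σ / 2) := by
  have hr0 : (0:ℝ) ≤ r := by linarith
  have hD0 : 0 < D := lt_of_lt_of_le (by positivity) hD1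
  have ht0 : 0 < μ ^ 2 / D := by positivity
  have ht1 : μ ^ 2 / D ≤ 1 := (div_le_one hD0).2 hD1
  have hq : μ ^ (2 * r) / D ^ r = (μ ^ 2 / D) ^ r := by
    rw [Real.div_rpow (by positivity) hD0.le, ← Real.rpow_natCast μ 2,
      ← Real.rpow_mul hμ.le]
    norm_num
  set t := μ ^ 2 / D with ht
  have hstep : 1 - t ^ r ≤ max 1 r * (1 - t) := by
    rcases le_total r 1 with h | h
    · have h1 : t ^ (1:ℝ) ≤ t ^ r := Real.rpow_le_rpow_of_exponent_ge ht0 ht1 h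
      rw [Real.rpow_one] at h1
      have hmax : (1:ℝ) ≤ max 1 r := le_max_left _ _
      nlinarith
    · have hb := one_add_mul_self_le_rpow_one_add (by linarith : (-1:ℝ) ≤ t - 1) h
      rw [max_eq_right h]
      have he : (1 : ℝ) + (t - 1) = t := by ring
      rw [he] at hb
      nlinarith
  have hq1 : t ^ r ≤ 1 := Real.rpow_le_one ht0.le ht1 hr0
  set A := α / (μ ^ 2 + α) with hA'
  have hA0 : 0 < A := by positivity
  have hA1 : A ≤ 1 := (div_le_one (by positivity)).2 (by nlinarith [sq_nonneg μ])
  have hA : 1 - t ≤ A := by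
    have h1 : 1 - t = (D - μ ^ 2) / D := by
      rw [ht]; field_simp
    rw [h1, hA', div_le_div_iff₀ hD0 (by positivity)]
    nlinarith [sq_nonneg μ]
  have hmax1 : (1:ℝ) ≤ max 1 r := le_max_left _ _
  have hbound : 1 - t ^ r ≤ max 1 r * A := hstep.trans (by nlinarith)
  have h0q : 0 ≤ 1 - t ^ r := by linarith
  have hpow : (1 - t ^ r) ^ m ≤ max 1 r ^ m * A ^ m := by
    calc (1 - t ^ r) ^ m ≤ (max 1 r * A) ^ m := pow_le_pow_left₀ h0q hbound m
    _ = max 1 r ^ m * A ^ m := mul_pow _ _ _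
  have hμσ : (0:ℝ) ≤ μ ^ σ := Real.rpow_nonneg hμ.le σ
  have hfin : A ^ m * μ ^ σ ≤ α ^ (σ / 2) := by
    have h1 : (A:ℝ) ^ m = A ^ (m:ℝ) := (Real.rpow_natCast A m).symm
    have h2 : A ^ (m:ℝ) ≤ A ^ (σ / 2) :=
      Real.rpow_le_rpow_of_exponent_ge hA0 hA1 (by push_cast; linarith)
    have h3 : μ ^ σ = (μ ^ 2) ^ (σ / 2) := by
      rw [← Real.rpow_natCast μ 2, ← Real.rpow_mul hμ.le]
      congr 1
      push_cast
      ring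
    have h4 : A ^ (σ / 2) * (μ ^ 2) ^ (σ / 2) = (A * μ ^ 2) ^ (σ / 2) :=
      (Real.mul_rpow hA0.le (by positivity)).symm
    have h5 : A * μ ^ 2 ≤ α := by
      rw [hA', div_mul_eq_mul_div, div_le_iff₀ (by positivity)]
      nlinarith [sq_nonneg μ]
    have h6 : (A * μ ^ 2) ^ (σ / 2) ≤ α ^ (σ / 2) :=
      Real.rpow_le_rpow (by positivity) h5 (by linarith)
    calc A ^ m * μ ^ σ = A ^ (m:ℝ) * (μ ^ 2) ^ (σ / 2) := by rw [h1, h3]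
    _ ≤ A ^ (σ / 2) * (μ ^ 2) ^ (σ / 2) :=
        mul_le_mul_of_nonneg_right h2 (by positivity)
    _ = (A * μ ^ 2) ^ (σ / 2) := h4
    _ ≤ α ^ (σ / 2) := h6
  rw [hq]
  calc (1 - t ^ r) ^ m * μ ^ σ ≤ (max 1 r ^ m * A ^ m) * μ ^ σ :=
        mul_le_mul_of_nonneg_right hpow hμσ
  _ = max 1 r ^ m * (A ^ m * μ ^ σ) := by ring
  _ ≤ max 1 r ^ m * α ^ (σ / 2) :=
      mul_le_mul_of_nonneg_left hfin (by positivity)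

/-- For μ₁ > 0, l ∈ ℕ, r ≥ 1/2, m ≥ 1, 0 ≤ σ ≤ 2m, α > 0 and 0 < μ ≤ μ₁,
with `q = q_l^r(α,μ)` and `Q_l^{m,r} = 1 - (1-q)^m`, one has
`(1 - Q_l^{m,r}(α,μ)) μ^σ = (1 - q)^m μ^σ ≤ max{1,r}^m μ₁^{max(σ-2m,0)} α^{σ/2}`,
and in particular `(1 - Q_l^{m,r}(α,μ)) μ^σ ≤ max{1,r}^m α^{σ/2}`
(condition (B2) with γ = 1/2, qualification 2m). -/
theorem stmt_12 (μ₁ : ℝ) (hμ₁ : 0 < μ₁) (l : ℕ) (r : ℝ) (hr : 1 / 2 ≤ r)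
    (m : ℕ) (hm : 1 ≤ m) (σ : ℝ) (hσ0 : 0 ≤ σ) (hσ2m : σ ≤ 2 * m)
    (α : ℝ) (hα : 0 < α) (μ : ℝ) (hμ : 0 < μ) (hμμ₁ : μ ≤ μ₁) :
    (1 - (1 - (1 - μ ^ (2 * r) / (μ ^ 2 + α * (1 - (μ / μ₁) ^ 2) ^ l) ^ r) ^ m)) * μ ^ σ
      = (1 - μ ^ (2 * r) / (μ ^ 2 + α * (1 - (μ / μ₁) ^ 2) ^ l) ^ r) ^ m * μ ^ σ ∧
    (1 - μ ^ (2 * r) / (μ ^ 2 + α * (1 - (μ / μ₁) ^ 2) ^ l) ^ r) ^ m * μ ^ σ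
      ≤ max 1 r ^ m * μ₁ ^ (max (σ - 2 * m) 0) * α ^ (σ / 2) ∧
    (1 - (1 - (1 - μ ^ (2 * r) / (μ ^ 2 + α * (1 - (μ / μ₁) ^ 2) ^ l) ^ r) ^ m)) * μ ^ σ
      ≤ max 1 r ^ m * α ^ (σ / 2) := by
  have hdiv0 : 0 ≤ μ / μ₁ := by positivity
  have hdiv1 : μ / μ₁ ≤ 1 := (div_le_one hμ₁).2 hμμ₁
  have hw0 : 0 ≤ 1 - (μ / μ₁) ^ 2 := by nlinarith
  have hw1 : 1 - (μ / μ₁) ^ 2 ≤ 1 := by nlinarith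
  have hwl0 : 0 ≤ (1 - (μ / μ₁) ^ 2) ^ l := pow_nonneg hw0 l
  have hwl1 : (1 - (μ / μ₁) ^ 2) ^ l ≤ 1 := pow_le_one₀ hw0 hw1
  have hD1 : μ ^ 2 ≤ μ ^ 2 + α * (1 - (μ / μ₁) ^ 2) ^ l := by nlinarith
  have hD2 : μ ^ 2 + α * (1 - (μ / μ₁) ^ 2) ^ l ≤ μ ^ 2 + α := by nlinarith
  have hkey := stmt_12_aux r hr m σ hσ0 hσ2m α hα μ hμ _ hD1 hD2
  have hmaxσ : max (σ - 2 * m) 0 = 0 := max_eq_right (by linarith)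
  refine ⟨by ring, ?_, ?_⟩
  · rw [hmaxσ, Real.rpow_zero, mul_one]
    exact hkey
  · calc (1 - (1 - (1 - μ ^ (2 * r) / (μ ^ 2 + α * (1 - (μ / μ₁) ^ 2) ^ l) ^ r) ^ m)) * μ ^ σ
        = (1 - μ ^ (2 * r) / (μ ^ 2 + α * (1 - (μ / μ₁) ^ 2) ^ l) ^ r) ^ m * μ ^ σ := by ring
    _ ≤ max 1 r ^ m * α ^ (σ / 2) := hkey
end

section
/- Fix μ₁ > 0, l ∈ ℕ, r ≥ 1/2, and a natural number m ≥ 1. There exists a constant c > 0 (depending only on l and μ₁) such that for all α with 0 < α ≤ μ₁² and all μ with 0 < μ ≤ μ₁, Q_l^{m,r}(α,μ)/μ ≤ m·c·α^{−1/2}. (Condition (B1) with γ = 1/2 for the iterated filter.) -/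
open Real

set_option maxHeartbeats 1000000

/-- For μ₁ > 0, l ∈ ℕ, r ≥ 1/2 and m ≥ 1 there is a constant c > 0
(depending only on l and μ₁) such that for all 0 < α ≤ μ₁² and 0 < μ ≤ μ₁,
`Q_l^{m,r}(α,μ)/μ ≤ m c α^{-1/2}` (condition (B1) with γ = 1/2 for the iterated filter). -/
theorem stmt_13 (μ₁ : ℝ) (hμ₁ : 0 < μ₁) (l : ℕ) (r : ℝ) (hr : 1 / 2 ≤ r)
    (m : ℕ) (hm : 1 ≤ m) :
    ∃ c : ℝ, 0 < c ∧ ∀ α : ℝ, 0 < α → α ≤ μ₁ ^ 2 → ∀ μ : ℝ, 0 < μ → μ ≤ μ₁ →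
      (1 - (1 - μ ^ (2 * r) / (μ ^ 2 + α * (1 - (μ / μ₁) ^ 2) ^ l) ^ r) ^ m) / μ
        ≤ m * c * α ^ (-(1 / 2 : ℝ)) := by
  set s : ℝ := Real.sqrt ((3 / 4 : ℝ) ^ l) with hs
  have hs0 : 0 < s := Real.sqrt_pos.2 (by positivity)
  refine ⟨2 / s, by positivity, ?_⟩
  intro α hα hαle μ hμ hμle
  set w : ℝ := (1 - (μ / μ₁) ^ 2) ^ l with hwdef
  have hμdiv : μ / μ₁ ≤ 1 := (div_le_one hμ₁).2 hμle
  have hμdiv0 : 0 ≤ μ / μ₁ := div_nonneg hμ.le hμ₁.le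
  have hw0 : 0 ≤ w := by
    apply pow_nonneg; nlinarith
  set D : ℝ := μ ^ 2 + α * w with hDdef
  have hD0 : 0 < D := add_pos_of_pos_of_nonneg (pow_pos hμ 2) (mul_nonneg hα.le hw0)
  have hbase : 0 < μ ^ 2 / D := div_pos (pow_pos hμ 2) hD0
  have hbase1 : μ ^ 2 / D ≤ 1 := by
    rw [div_le_one hD0]
    nlinarith [mul_nonneg hα.le hw0]
  have hq_eq : μ ^ (2 * r) / D ^ r = (μ ^ 2 / D) ^ r := by
    rw [Real.div_rpow (by positivity) hD0.le, ← Real.rpow_natCast μ 2,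
      ← Real.rpow_mul hμ.le]
    norm_num
  set q : ℝ := (μ ^ 2 / D) ^ r with hqdef
  have hq0 : 0 ≤ q := Real.rpow_nonneg hbase.le r
  have hq1 : q ≤ 1 := Real.rpow_le_one hbase.le hbase1 (by linarith)
  -- Bernoulli: (1 - q)^m ≥ 1 - m q
  have hbern : 1 - (m : ℝ) * q ≤ (1 - q) ^ m := by
    have := one_add_mul_le_pow (a := -q) (by linarith) m
    simpa [sub_eq_add_neg, mul_comm] using this
  -- q ≤ μ / √D
  have hq_le : q ≤ μ / Real.sqrt D := by
    have h1 : q ≤ (μ ^ 2 / D) ^ ((1 : ℝ) / 2) :=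
      Real.rpow_le_rpow_of_exponent_ge hbase hbase1 hr
    have h2 : (μ ^ 2 / D) ^ ((1 : ℝ) / 2) = μ / Real.sqrt D := by
      rw [← Real.sqrt_eq_rpow, Real.sqrt_div (by positivity) D, Real.sqrt_sq hμ.le]
    linarith [h1, h2.le, h2.ge]
  -- D lower bound
  have hDlb : α * (3 / 4 : ℝ) ^ l / 4 ≤ D := by
    have h34 : (3 / 4 : ℝ) ^ l ≤ 1 := pow_le_one₀ (by norm_num) (by norm_num)
    rcases le_or_gt (μ₁ / 2) μ with hcase | hcase
    · have hμsq : μ₁ ^ 2 / 4 ≤ μ ^ 2 := by nlinarith [sq_nonneg (μ - μ₁ / 2)]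
      have h7 : α * (3 / 4 : ℝ) ^ l / 4 ≤ α / 4 := by
        have := mul_le_mul_of_nonneg_left h34 hα.le
        linarith
      have hαw : 0 ≤ α * w := mul_nonneg hα.le hw0
      linarith
    · have hhalf : μ / μ₁ < 1 / 2 := by
        rw [div_lt_iff₀ hμ₁]; linarith
      have h34' : (3 / 4 : ℝ) ≤ 1 - (μ / μ₁) ^ 2 := by
        have hsq : (μ / μ₁) ^ 2 < (1 / 2 : ℝ) ^ 2 :=
          pow_lt_pow_left₀ hhalf hμdiv0 (by norm_num)
        norm_num at hsq; linarith
      have hwlb : (3 / 4 : ℝ) ^ l ≤ w :=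
        hwdef ▸ pow_le_pow_left₀ (by norm_num : (0:ℝ) ≤ 3/4) h34' l
      have h5 : α * (3 / 4 : ℝ) ^ l ≤ α * w :=
        mul_le_mul_of_nonneg_left hwlb hα.le
      have h6 : 0 ≤ α * (3 / 4 : ℝ) ^ l := mul_nonneg hα.le (by positivity)
      linarith [pow_pos hμ 2]
  -- √D lower bound: √α * s / 2 ≤ √D
  have hsqrtD : Real.sqrt α * s / 2 ≤ Real.sqrt D := by
    have : Real.sqrt (α * (3 / 4 : ℝ) ^ l / 4) ≤ Real.sqrt D :=
      Real.sqrt_le_sqrt hDlb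
    calc Real.sqrt α * s / 2 = Real.sqrt (α * (3 / 4 : ℝ) ^ l / 4) := by
          rw [Real.sqrt_div (by positivity), Real.sqrt_mul hα.le, hs]
          norm_num
      _ ≤ Real.sqrt D := this
  have hsqrtα : 0 < Real.sqrt α := Real.sqrt_pos.2 hα
  have hsqrtD0 : 0 < Real.sqrt D := Real.sqrt_pos.2 hD0
  -- put everything together
  have hrhs : (m : ℝ) * (2 / s) * α ^ (-(1 / 2 : ℝ)) = (m : ℝ) * (2 / s) / Real.sqrt α := by
    rw [Real.rpow_neg hα.le, ← Real.sqrt_eq_rpow, div_eq_mul_inv]; ring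
  rw [hq_eq, hrhs]
  have hm0 : (0 : ℝ) ≤ m := Nat.cast_nonneg m
  calc (1 - (1 - q) ^ m) / μ ≤ ((m : ℝ) * q) / μ := by gcongr; linarith
    _ ≤ ((m : ℝ) * (μ / Real.sqrt D)) / μ := by gcongr
    _ = (m : ℝ) / Real.sqrt D := by
        field_simp
    _ ≤ (m : ℝ) * (2 / s) / Real.sqrt α := by
        rw [div_le_div_iff₀ hsqrtD0 hsqrtα]
        have h := mul_le_mul_of_nonneg_left hsqrtD
          (by positivity : (0 : ℝ) ≤ 2 * m / s)
        have hkey : 2 * (m : ℝ) / s * (Real.sqrt α * s / 2) = (m : ℝ) * Real.sqrt α := by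
          field_simp
        have hsame : (m : ℝ) * (2 / s) * Real.sqrt D = 2 * m / s * Real.sqrt D := by
          ring
        linarith
end

section
/- Fix μ₁ > 0, l ∈ ℕ, and r ≥ 1/2. For every α > 0 and every μ with 0 < μ ≤ μ₁, (1 − q_l^r(α,μ))·μ² ≤ max{1, r}·α. (The σ = 2 case of condition (B2) for the fractional weighted Tikhonov filter.) -/
open Real

/-- For μ₁ > 0, l ∈ ℕ, r ≥ 1/2, α > 0 and 0 < μ ≤ μ₁,
`(1 - q_l^r(α,μ)) μ² ≤ max{1,r} α` (the σ = 2 case of condition (B2)). -/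
theorem stmt_14 (μ₁ : ℝ) (hμ₁ : 0 < μ₁) (l : ℕ) (r : ℝ) (hr : 1 / 2 ≤ r)
    (α : ℝ) (hα : 0 < α) (μ : ℝ) (hμ : 0 < μ) (hμμ₁ : μ ≤ μ₁) :
    (1 - μ ^ (2 * r) / (μ ^ 2 + α * (1 - (μ / μ₁) ^ 2) ^ l) ^ r) * μ ^ 2
      ≤ max 1 r * α := by
  set w : ℝ := (1 - (μ / μ₁) ^ 2) ^ l with hw
  have hb0 : 0 ≤ 1 - (μ / μ₁) ^ 2 := by
    have : (μ / μ₁) ^ 2 ≤ 1 := by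
      apply pow_le_one₀ (by positivity)
      rw [div_le_one hμ₁]; exact hμμ₁
    linarith
  have hb1 : 1 - (μ / μ₁) ^ 2 ≤ 1 := by nlinarith [sq_nonneg (μ/μ₁)]
  have hw0 : 0 ≤ w := pow_nonneg hb0 l
  have hw1 : w ≤ 1 := pow_le_one₀ hb0 hb1
  have hD : 0 < μ ^ 2 + α * w := by positivity
  set q : ℝ := μ ^ 2 / (μ ^ 2 + α * w) with hq
  have hq0 : 0 < q := by positivity
  have hq1 : q ≤ 1 := by
    rw [hq, div_le_one hD]; nlinarith
  have hrw : μ ^ (2 * r) / (μ ^ 2 + α * w) ^ r = q ^ r := by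
    rw [hq, Real.div_rpow (by positivity) hD.le,
      show (2 : ℝ) * r = (2 : ℕ) * r by norm_num,
      Real.rpow_natCast_mul hμ.le]
  rw [hrw]
  have hM1 : (1 : ℝ) ≤ max 1 r := le_max_left _ _
  have key : 1 - q ^ r ≤ max 1 r * (1 - q) := by
    rcases le_total 1 r with h1 | h1
    · rw [max_eq_right h1]
      have := one_add_mul_self_le_rpow_one_add (s := q - 1) (by linarith) h1
      have h2 : (1 + (q - 1)) ^ r = q ^ r := by norm_num
      nlinarith
    · rw [max_eq_left h1]
      have := Real.rpow_le_rpow_of_exponent_ge hq0 hq1 h1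
      rw [Real.rpow_one] at this
      linarith
  have hstep : (1 - q) * μ ^ 2 ≤ α := by
    have : (1 - q) * μ ^ 2 = α * w * μ ^ 2 / (μ ^ 2 + α * w) := by
      field_simp [hq]
      rw [hq, sub_mul, div_mul_cancel₀ _ hD.ne']; ring
    rw [this, div_le_iff₀ hD]
    nlinarith [mul_le_mul_of_nonneg_left hw1 hα.le, sq_nonneg μ, mul_nonneg (mul_nonneg hα.le hw0) hα.le]
  calc (1 - q ^ r) * μ ^ 2 ≤ max 1 r * (1 - q) * μ ^ 2 := by
        apply mul_le_mul_of_nonneg_right _ (by positivity); linarith [key]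
    _ = max 1 r * ((1 - q) * μ ^ 2) := by ring
    _ ≤ max 1 r * α := by
        apply mul_le_mul_of_nonneg_left hstep (by linarith)
end
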